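/- In the discrete balance-point setting: (a) for any j with k₂ ≤ j ≤ k₃ and any indices 1 ≤ i₁ ≤ k₁ and 2 ≤ i₂ ≤ k₁, if (i₁ = 1 or aver(i₁,j) ≥ a_{i₁−1}) and aver(i₂,j) < a_{i₂−1}, then i₁ ≤ i*(j) < i₂; (b) for any j₁, j₂ with k₂ ≤ j₁ < j₂ ≤ k₃ − 1, if aver(i*(j₂), j₂) ≤ a_{j₂+1} and aver(i*(j₁), j₁) > a_{j₁+1}, then j₁ < j* ≤ j₂. -/

import Mathlib

open Finset

/-- `aver a i j = (∑_{l=i}^j a_l)/(j − i + 1)`. -/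
noncomputable def aver (a : ℕ → ℝ) (i j : ℕ) : ℝ :=
  (∑ l ∈ Finset.Icc i j, a l) / ((j : ℝ) - (i : ℝ) + 1)

open Classical in
/-- The left balance point `i*(j)`. -/
noncomputable def istar (a : ℕ → ℝ) (k₁ j : ℕ) : ℕ :=
  if h : ((Finset.Icc 2 k₁).filter fun i => aver a i j < a (i - 1)).Nonempty
  then ((Finset.Icc 2 k₁).filter fun i => aver a i j < a (i - 1)).min' h - 1
  else k₁

open Classical in
/-- The right balance point `j*`. -/
noncomputable def jstar (a : ℕ → ℝ) (k₁ k₂ k₃ : ℕ) : ℕ :=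
  if h : ((Finset.Icc k₂ (k₃ - 1)).filter fun j => a (j + 1) < aver a (istar a k₁ j) j).Nonempty
  then ((Finset.Icc k₂ (k₃ - 1)).filter fun j => a (j + 1) < aver a (istar a k₁ j) j).max' h + 1
  else k₂

lemma aver_mul (a : ℕ → ℝ) {i j : ℕ} (h : i ≤ j) :
    ((j:ℝ) - i + 1) * aver a i j = ∑ l ∈ Finset.Icc i j, a l := by
  have hi : (i:ℝ) ≤ j := by exact_mod_cast h
  have hd : ((j:ℝ) - i + 1) ≠ 0 := by linarith
  rw [aver]; field_simp

lemma cons_rec (a : ℕ → ℝ) {i j : ℕ} (h : i < j) :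
    ((j:ℝ) - i + 1) * aver a i j = a i + ((j:ℝ) - i) * aver a (i+1) j := by
  have h1 := aver_mul a h.le
  have h2 := aver_mul a (Nat.succ_le_of_lt h)
  have h3 : Finset.Icc i j = Finset.cons i (Finset.Ioc i j) (by simp) :=
    Finset.Icc_eq_cons_Ioc h.le
  rw [h1, h3, Finset.sum_cons, ← Finset.Icc_add_one_left_eq_Ioc]
  rw [← Nat.succ_eq_add_one, ← h2]; push_cast; ring

lemma snoc_rec (a : ℕ → ℝ) {i j : ℕ} (h : i ≤ j) :
    ((j:ℝ) - i + 2) * aver a i (j+1) = ((j:ℝ) - i + 1) * aver a i j + a (j+1) := by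
  have h1 := aver_mul a (h.trans (Nat.le_succ j))
  have h2 := aver_mul a h
  rw [Finset.sum_Icc_succ_top (h.trans (Nat.le_succ j))] at h1
  rw [← h2] at h1
  push_cast at h1 ⊢
  linarith

-- if a i ≤ aver(i+1,j) then aver(i,j) ≤ aver(i+1,j)
lemma step_le (a : ℕ → ℝ) {i j : ℕ} (h : i < j) (hle : a i ≤ aver a (i+1) j) :
    aver a i j ≤ aver a (i+1) j := by
  have h1 := cons_rec a h
  have hi : (i:ℝ) + 1 ≤ j := by exact_mod_cast h
  nlinarith [h1]

-- if aver(i+1,j) < a i then aver(i+1,j) < aver(i,j)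
lemma step_lt (a : ℕ → ℝ) {i j : ℕ} (h : i < j) (hlt : aver a (i+1) j < a i) :
    aver a (i+1) j < aver a i j := by
  have h1 := cons_rec a h
  have hi : (i:ℝ) + 1 ≤ j := by exact_mod_cast h
  nlinarith [h1]

-- if aver(i,j) < a i then aver(i+1,j) < aver(i,j)
lemma step_lt' (a : ℕ → ℝ) {i j : ℕ} (h : i < j) (hlt : aver a i j < a i) :
    aver a (i+1) j < aver a i j := by
  have h1 := cons_rec a h
  have hi : (i:ℝ) + 1 ≤ j := by exact_mod_cast h
  nlinarith [h1]

lemma snoc_le (a : ℕ → ℝ) {i j : ℕ} (h : i ≤ j) {c : ℝ}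
    (h1 : aver a i j ≤ c) (h2 : a (j+1) ≤ c) : aver a i (j+1) ≤ c := by
  have hr := snoc_rec a h
  have hi : (i:ℝ) ≤ j := by exact_mod_cast h
  nlinarith [hr]

lemma chain (f : ℕ → ℝ) : ∀ t i, i ≤ t → (∀ l, i ≤ l → l < t → f l ≤ f (l+1)) → f i ≤ f t := by
  intro t
  induction t with
  | zero => intro i h _; interval_cases i; exact le_rfl
  | succ t ih =>
    intro i h hstep
    rcases Nat.lt_succ_iff_lt_or_eq.mp (Nat.lt_succ_of_le h) with h' | h'
    · exact (ih i (Nat.lt_succ_iff.mp h') fun l hl hl' => hstep l hl (hl'.trans (Nat.lt_succ_self t))).trans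
        (hstep t (by omega) (Nat.lt_succ_self t))
    · rw [h']

open Finset

section Aux

variable (a : ℕ → ℝ) (k₁ k₂ : ℕ)

open Classical in
lemma S_closed (hk₁₂ : k₁ < k₂)
    (hmono1 : ∀ i, 1 ≤ i → i + 1 ≤ k₁ → a i ≤ a (i + 1))
    {j : ℕ} (hj : k₂ ≤ j) :
    ∀ i i', i ∈ (Finset.Icc 2 k₁).filter (fun i => aver a i j < a (i - 1)) →
      i ≤ i' → i' ≤ k₁ →
      i' ∈ (Finset.Icc 2 k₁).filter (fun i => aver a i j < a (i - 1)) := by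
  intro i i' hi hle
  induction i', hle using Nat.le_induction with
  | base => intro _; exact hi
  | succ n hn ih =>
    intro hk
    have hnS := ih (by omega)
    simp only [Finset.mem_filter, Finset.mem_Icc] at hnS ⊢
    obtain ⟨⟨h2n, _⟩, hlt⟩ := hnS
    have hsub : n - 1 + 1 = n := by omega
    have hn1 : a (n-1) ≤ a n := by
      have := hmono1 (n-1) (by omega) (by omega)
      rwa [hsub] at this
    have hlt' : aver a n j < a n := lt_of_lt_of_le hlt hn1
    have hstep := step_lt' a (show n < j by omega) hlt'
    refine ⟨⟨by omega, hk⟩, ?_⟩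
    have h1 : n + 1 - 1 = n := by omega
    rw [h1]
    exact hstep.trans hlt'

open Classical in
lemma istar_bounds (hk₁ : 1 ≤ k₁) (j : ℕ) : 1 ≤ istar a k₁ j ∧ istar a k₁ j ≤ k₁ := by
  rw [istar]
  split_ifs with h
  · have := Finset.min'_mem _ h
    simp only [Finset.mem_filter, Finset.mem_Icc] at this
    omega
  · omega

open Classical in
lemma aver_le_istar (hk₁ : 1 ≤ k₁) (hk₁₂ : k₁ < k₂)
    (hmono1 : ∀ i, 1 ≤ i → i + 1 ≤ k₁ → a i ≤ a (i + 1))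
    {j : ℕ} (hj : k₂ ≤ j) :
    ∀ i, 1 ≤ i → i ≤ k₁ → aver a i j ≤ aver a (istar a k₁ j) j := by
  intro i hi hik
  rw [istar]
  split_ifs with h
  · set m := ((Finset.Icc 2 k₁).filter (fun i => aver a i j < a (i - 1))).min' h with hm
    have hmS := Finset.min'_mem _ h
    have hmIcc : 2 ≤ m ∧ m ≤ k₁ := by
      have := hmS
      simp only [Finset.mem_filter, Finset.mem_Icc] at this
      exact this.1
    rcases le_or_gt i (m-1) with hcase | hcase
    · refine chain (fun l => aver a l j) (m-1) i hcase ?_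
      intro l hl hl'
      have hl1 : l + 1 ∉ (Finset.Icc 2 k₁).filter (fun i => aver a i j < a (i - 1)) := by
        intro hmem
        have := Finset.min'_le _ _ hmem
        omega
      simp only [Finset.mem_filter, Finset.mem_Icc] at hl1
      push_neg at hl1
      have hale : a l ≤ aver a (l+1) j := by
        have := hl1 ⟨by omega, by omega⟩
        simpa using this
      exact step_le a (show l < j by omega) hale
    · have hc := chain (fun l => -aver a l j) i (m-1) (by omega) ?_
      · simpa using hc
      intro l hl hl'
      have hl1 : l + 1 ∈ (Finset.Icc 2 k₁).filter (fun i => aver a i j < a (i - 1)) :=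
        S_closed a k₁ k₂ hk₁₂ hmono1 hj m (l+1) hmS (by omega) (by omega)
      simp only [Finset.mem_filter, Finset.mem_Icc] at hl1
      have hlt : aver a (l+1) j < a l := by
        have := hl1.2
        simpa using this
      have := step_lt a (show l < j by omega) hlt
      linarith
  · refine chain (fun l => aver a l j) k₁ i hik ?_
    intro l hl hl'
    have hl1 : l + 1 ∉ (Finset.Icc 2 k₁).filter (fun i => aver a i j < a (i - 1)) := by
      intro hmem; exact h ⟨_, hmem⟩
    simp only [Finset.mem_filter, Finset.mem_Icc] at hl1
    push_neg at hl1
    have hale : a l ≤ aver a (l+1) j := by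
      have := hl1 ⟨by omega, by omega⟩
      simpa using this
    exact step_le a (show l < j by omega) hale

lemma step_b (k₃ : ℕ) (hk₁ : 1 ≤ k₁) (hk₁₂ : k₁ < k₂)
    (hmono1 : ∀ i, 1 ≤ i → i + 1 ≤ k₁ → a i ≤ a (i + 1))
    (hmono3 : ∀ i, k₂ ≤ i → i + 1 ≤ k₃ → a i ≤ a (i + 1))
    {j : ℕ} (hj : k₂ ≤ j) (hj3 : j + 2 ≤ k₃)
    (hle : aver a (istar a k₁ j) j ≤ a (j+1)) :
    aver a (istar a k₁ (j+1)) (j+1) ≤ a (j+2) := by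
  obtain ⟨h1, h2⟩ := istar_bounds a k₁ hk₁ (j+1)
  have hmax := aver_le_istar a k₁ k₂ hk₁ hk₁₂ hmono1 hj (istar a k₁ (j+1)) h1 h2
  have hle1 : aver a (istar a k₁ (j+1)) j ≤ a (j+1) := hmax.trans hle
  have hle2 := snoc_le a (show istar a k₁ (j+1) ≤ j by omega) hle1 (le_refl _)
  have := hmono3 (j+1) (by omega) (by omega)
  calc aver a (istar a k₁ (j+1)) (j+1) ≤ a (j+1) := hle2
    _ ≤ a (j+1+1) := this

end Aux

theorem statement7
    (p k₁ k₂ k₃ : ℕ) (a : ℕ → ℝ)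
    (hk₁ : 1 ≤ k₁) (hk₁₂ : k₁ < k₂) (hk₂₃ : k₂ ≤ k₃) (hk₃p : k₃ ≤ p)
    (hmono1 : ∀ i, 1 ≤ i → i + 1 ≤ k₁ → a i ≤ a (i + 1))
    (hdec : ∀ i, k₁ ≤ i → i + 1 ≤ k₂ → a (i + 1) < a i)
    (hmono3 : ∀ i, k₂ ≤ i → i + 1 ≤ k₃ → a i ≤ a (i + 1)) :
    (∀ j i₁ i₂, k₂ ≤ j → j ≤ k₃ → 1 ≤ i₁ → i₁ ≤ k₁ → 2 ≤ i₂ → i₂ ≤ k₁ →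
      (i₁ = 1 ∨ a (i₁ - 1) ≤ aver a i₁ j) → aver a i₂ j < a (i₂ - 1) →
      i₁ ≤ istar a k₁ j ∧ istar a k₁ j < i₂) ∧
    (∀ j₁ j₂, k₂ ≤ j₁ → j₁ < j₂ → j₂ + 1 ≤ k₃ →
      aver a (istar a k₁ j₂) j₂ ≤ a (j₂ + 1) → a (j₁ + 1) < aver a (istar a k₁ j₁) j₁ →
      j₁ < jstar a k₁ k₂ k₃ ∧ jstar a k₁ k₂ k₃ ≤ j₂) := by
  classical
  constructor
  · intro j i₁ i₂ hj2 hj3 hi₁1 hi₁k hi₂2 hi₂k hi₁cond hi₂lt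
    have hi₂mem : i₂ ∈ (Finset.Icc 2 k₁).filter (fun i => aver a i j < a (i - 1)) := by
      simp only [Finset.mem_filter, Finset.mem_Icc]
      exact ⟨⟨hi₂2, hi₂k⟩, hi₂lt⟩
    have hne : ((Finset.Icc 2 k₁).filter (fun i => aver a i j < a (i - 1))).Nonempty :=
      ⟨i₂, hi₂mem⟩
    rw [istar, dif_pos hne]
    set m := ((Finset.Icc 2 k₁).filter (fun i => aver a i j < a (i - 1))).min' hne with hm
    have hmS := Finset.min'_mem _ hne
    have hmIcc : 2 ≤ m ∧ m ≤ k₁ := by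
      have := hmS
      simp only [Finset.mem_filter, Finset.mem_Icc] at this
      exact this.1
    have hmle : m ≤ i₂ := Finset.min'_le _ _ hi₂mem
    refine ⟨?_, by omega⟩
    by_contra hcon
    push_neg at hcon
    have hmi₁ : m ≤ i₁ := by omega
    have hi₁2 : 2 ≤ i₁ := by omega
    rcases hi₁cond with h1 | h1
    · omega
    · have hi₁mem := S_closed a k₁ k₂ hk₁₂ hmono1 hj2 m i₁ hmS hmi₁ hi₁k
      simp only [Finset.mem_filter, Finset.mem_Icc] at hi₁mem
      exact absurd hi₁mem.2 (not_lt.mpr h1)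
  · intro j₁ j₂ hj1 hj12 hj2k hj2le hj1lt
    have hj₁mem : j₁ ∈ (Finset.Icc k₂ (k₃-1)).filter
        (fun j => a (j + 1) < aver a (istar a k₁ j) j) := by
      simp only [Finset.mem_filter, Finset.mem_Icc]
      exact ⟨⟨hj1, by omega⟩, hj1lt⟩
    have hne : ((Finset.Icc k₂ (k₃-1)).filter
        (fun j => a (j + 1) < aver a (istar a k₁ j) j)).Nonempty := ⟨j₁, hj₁mem⟩
    rw [jstar, dif_pos hne]
    set M := ((Finset.Icc k₂ (k₃-1)).filter
        (fun j => a (j + 1) < aver a (istar a k₁ j) j)).max' hne with hM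
    have hMS := Finset.max'_mem _ hne
    have hMfacts : (k₂ ≤ M ∧ M ≤ k₃ - 1) ∧ a (M+1) < aver a (istar a k₁ M) M := by
      have := hMS
      simpa only [Finset.mem_filter, Finset.mem_Icc] using this
    have hj₁le : j₁ ≤ M := Finset.le_max' _ _ hj₁mem
    refine ⟨by omega, ?_⟩
    by_contra hcon
    push_neg at hcon
    have hM2 : j₂ ≤ M := by omega
    have hprop : ∀ j, j₂ ≤ j → j ≤ k₃ - 1 → aver a (istar a k₁ j) j ≤ a (j+1) := by
      intro j hj
      induction j, hj using Nat.le_induction with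
      | base => intro _; exact hj2le
      | succ n hn ih =>
        intro hk
        have hnle := ih (by omega)
        exact step_b a k₁ k₂ k₃ hk₁ hk₁₂ hmono1 hmono3 (by omega) (by omega) hnle
    have := hprop M hM2 hMfacts.1.2
    linarith [hMfacts.2]
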